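/- Let T(G) be the total graph of G, whose vertices are the vertices and edges of G, with adjacency defined by adjacency or incidence in G. Then F(T(G)) = 8F(G) + ξ₄(G) + 3·ReZG(G). -/

import Mathlib

open SimpleGraph Finset
open scoped Classical

noncomputable section

/-- The generalized hierarchical product `G(U)ΠH`. -/
def hierProd {α β : Type*} (G : SimpleGraph α) (H : SimpleGraph β) (U : Set α) :
    SimpleGraph (α × β) where
  Adj p q := (p.1 = q.1 ∧ p.1 ∈ U ∧ H.Adj p.2 q.2) ∨ (p.2 = q.2 ∧ G.Adj p.1 q.1)
  symm := by
    refine ⟨?_⟩; rintro p q (⟨h1, h2, h3⟩ | ⟨h1, h2⟩)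
    · exact Or.inl ⟨h1.symm, h1 ▸ h2, h3.symm⟩
    · exact Or.inr ⟨h1.symm, h2.symm⟩
  loopless := by
    refine ⟨?_⟩; rintro p (⟨_, _, h⟩ | ⟨_, h⟩)
    · exact H.loopless.irrefl _ h
    · exact G.loopless.irrefl _ h

/-- The F-index (forgotten topological index): sum of cubes of degrees. -/
def Findex {α : Type*} [Fintype α] (G : SimpleGraph α) : ℕ :=
  ∑ v, G.degree v ^ 3

/-- The first Zagreb index: sum of squares of degrees. -/
def M1 {α : Type*} [Fintype α] (G : SimpleGraph α) : ℕ :=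
  ∑ v, G.degree v ^ 2

/-- The general first Zagreb index with exponent `n`. -/
def xiIndex {α : Type*} [Fintype α] (G : SimpleGraph α) (n : ℕ) : ℕ :=
  ∑ v, G.degree v ^ n

/-- The redefined Zagreb index `ReZG(G) = Σ_{uv∈E} d(u)d(v)(d(u)+d(v))`. -/
def ReZG {α : Type*} [Fintype α] (G : SimpleGraph α) : ℕ :=
  ∑ e ∈ G.edgeFinset,
    Sym2.lift ⟨fun u v => G.degree u * G.degree v * (G.degree u + G.degree v),
      fun u v => by ring⟩ e

/-- The subdivision graph `S(G)`: each edge replaced by a path of length two. -/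
def Sgraph {α : Type*} (G : SimpleGraph α) : SimpleGraph (α ⊕ ↥G.edgeSet) where
  Adj x y :=
    match x, y with
    | Sum.inl u, Sum.inr e => u ∈ (e : Sym2 α)
    | Sum.inr e, Sum.inl u => u ∈ (e : Sym2 α)
    | _, _ => False
  symm := by refine ⟨?_⟩; rintro (u | e) (v | f) h <;> simp_all
  loopless := by refine ⟨?_⟩; rintro (u | e) h <;> simp_all

/-- The graph on `V(G) ⊕ E(G)` whose only edges are the original edges of `G`. -/
def Ograph {α : Type*} (G : SimpleGraph α) : SimpleGraph (α ⊕ ↥G.edgeSet) where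
  Adj x y :=
    match x, y with
    | Sum.inl u, Sum.inl v => G.Adj u v
    | _, _ => False
  symm := by refine ⟨?_⟩; rintro (u | e) (v | f) h <;> simp_all <;> exact h.symm
  loopless := by refine ⟨?_⟩; rintro (u | e) h <;> simp_all

/-- The graph on `V(G) ⊕ E(G)` whose edges join pairs of adjacent edges of `G`
(line-graph adjacency). -/
def Lgraph {α : Type*} (G : SimpleGraph α) : SimpleGraph (α ⊕ ↥G.edgeSet) where
  Adj x y :=
    match x, y with
    | Sum.inr e, Sum.inr f => e ≠ f ∧ ∃ u, u ∈ (e : Sym2 α) ∧ u ∈ (f : Sym2 α)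
    | _, _ => False
  symm := by
    refine ⟨?_⟩; rintro (u | e) (v | f) h <;> simp_all
    exact ⟨Ne.symm h.1, h.2.imp fun u hu => hu.symm⟩
  loopless := by refine ⟨?_⟩; rintro (u | e) h <;> simp_all

/-- The triangle parallel graph `R(G)`. -/
def Rgraph {α : Type*} (G : SimpleGraph α) : SimpleGraph (α ⊕ ↥G.edgeSet) :=
  Sgraph G ⊔ Ograph G

/-- The line superposition graph `Q(G)`. -/
def Qgraph {α : Type*} (G : SimpleGraph α) : SimpleGraph (α ⊕ ↥G.edgeSet) :=
  Sgraph G ⊔ Lgraph G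

/-- The total graph `T(G)`. -/
def Tgraph {α : Type*} (G : SimpleGraph α) : SimpleGraph (α ⊕ ↥G.edgeSet) :=
  Sgraph G ⊔ Ograph G ⊔ Lgraph G

/-- The F-sum `G +_F H`, where `K` is one of `S(G), R(G), Q(G), T(G)`:
the generalized hierarchical product `K(V(G))ΠH`. -/
def FSum {α β : Type*} {G : SimpleGraph α} (K : SimpleGraph (α ⊕ ↥G.edgeSet))
    (H : SimpleGraph β) : SimpleGraph ((α ⊕ ↥G.edgeSet) × β) :=
  hierProd K H (Set.range Sum.inl)

end
section
variable {α : Type*} (G : SimpleGraph α)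

lemma tAdj_inl_inl (u w : α) : (Tgraph G).Adj (Sum.inl u) (Sum.inl w) ↔ G.Adj u w := by
  show (False ∨ G.Adj u w) ∨ False ↔ _
  tauto

lemma tAdj_inl_inr (u : α) (f : G.edgeSet) :
    (Tgraph G).Adj (Sum.inl u) (Sum.inr f) ↔ u ∈ (f : Sym2 α) := by
  show (u ∈ (f : Sym2 α) ∨ False) ∨ False ↔ _
  tauto

lemma tAdj_inr_inl (u : α) (f : G.edgeSet) :
    (Tgraph G).Adj (Sum.inr f) (Sum.inl u) ↔ u ∈ (f : Sym2 α) := by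
  show (u ∈ (f : Sym2 α) ∨ False) ∨ False ↔ _
  tauto

lemma tAdj_inr_inr (e f : G.edgeSet) :
    (Tgraph G).Adj (Sum.inr e) (Sum.inr f) ↔
      e ≠ f ∧ ∃ u, u ∈ (e : Sym2 α) ∧ u ∈ (f : Sym2 α) := by
  show (False ∨ False) ∨ (e ≠ f ∧ ∃ u, u ∈ (e : Sym2 α) ∧ u ∈ (f : Sym2 α)) ↔ _
  tauto
end
section
variable {α : Type*} [Fintype α] (G : SimpleGraph α)

lemma sumDartFst (f : α → α → ℕ) :
    ∑ d : G.Dart, f d.fst d.snd = ∑ v, ∑ w ∈ G.neighborFinset v, f v w := by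
  let e : (Σ v, G.neighborSet v) ≃ G.Dart :=
    { toFun := fun s => ⟨(s.fst, s.snd), s.snd.property⟩
      invFun := fun d => ⟨d.fst, d.snd, d.adj⟩
      left_inv := fun s => by ext <;> simp
      right_inv := fun d => by ext <;> simp }
  rw [← e.sum_comp, ← Finset.univ_sigma_univ, Finset.sum_sigma]
  refine Finset.sum_congr rfl fun v _ => ?_
  rw [← Finset.sum_coe_sort (G.neighborFinset v)]
  exact Fintype.sum_equiv (Equiv.subtypeEquivRight (by simp)) _ _ (fun x => rfl)

lemma sumDartSnd (f : α → ℕ) :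
    ∑ d : G.Dart, f d.snd = ∑ d : G.Dart, f d.fst := by
  rw [← Equiv.sum_comp (Function.Involutive.toPerm _ (SimpleGraph.Dart.symm_involutive (G := G)))
    (fun d => f d.fst)]
  rfl

lemma sumDartEdge (f : α → α → ℕ) (hf : ∀ u v, f u v = f v u) :
    ∑ d : G.Dart, f d.fst d.snd = 2 * ∑ e ∈ G.edgeFinset, Sym2.lift ⟨f, hf⟩ e := by
  rw [Finset.mul_sum,
    ← Finset.sum_fiberwise_of_maps_to (g := SimpleGraph.Dart.edge)
      (fun d _ => (SimpleGraph.mem_edgeFinset).2 d.edge_mem)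
      (fun d : G.Dart => f d.fst d.snd)]
  refine Finset.sum_congr rfl fun e he => ?_
  rw [SimpleGraph.mem_edgeFinset] at he
  induction e using Sym2.ind with
  | _ u v =>
    have hadj : G.Adj u v := he
    let d : G.Dart := ⟨(u, v), hadj⟩
    have hfib : Finset.univ.filter (fun d' : G.Dart => d'.edge = s(u,v)) = {d, d.symm} := by
      have := SimpleGraph.Dart.edge_fiber d
      exact this
    rw [hfib, Finset.sum_pair (Ne.symm d.symm_ne)]
    simp [d, hf u v, two_mul]
end
section
variable {α : Type*} [Fintype α] (G : SimpleGraph α)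

/-- edges (as subtype) incident to a vertex -/
noncomputable def Iv (v : α) : Finset G.edgeSet :=
  Finset.univ.filter (fun f : G.edgeSet => v ∈ (f : Sym2 α))

lemma card_Iv (v : α) : (Iv G v).card = G.degree v := by
  classical
  rw [Iv, ← Fintype.card_subtype]
  rw [← SimpleGraph.card_incidenceSet_eq_degree]
  exact Fintype.card_congr
    { toFun := fun f => ⟨(f : Sym2 α), (f : G.edgeSet).2, f.2⟩
      invFun := fun e => ⟨⟨(e : Sym2 α), e.2.1⟩, e.2.2⟩
      left_inv := fun f => by ext; rfl
      right_inv := fun e => by ext; rfl }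

lemma mem_Iv {v : α} {f : G.edgeSet} : f ∈ Iv G v ↔ v ∈ (f : Sym2 α) := by
  simp [Iv]
end
section
variable {α : Type*} [Fintype α] (G : SimpleGraph α)

lemma degree_Tgraph_inl (v : α) :
    (Tgraph G).degree (Sum.inl v) = 2 * G.degree v := by
  classical
  have hnb : (Tgraph G).neighborFinset (Sum.inl v) =
      (G.neighborFinset v).map ⟨Sum.inl, Sum.inl_injective⟩ ∪
        (Iv G v).map ⟨Sum.inr, Sum.inr_injective⟩ := by
    ext x
    cases x with
    | inl w =>
        simp [SimpleGraph.mem_neighborFinset, tAdj_inl_inl, mem_Iv]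
    | inr f =>
        simp [SimpleGraph.mem_neighborFinset, tAdj_inl_inr, mem_Iv]
  have hdisj : Disjoint ((G.neighborFinset v).map ⟨Sum.inl, Sum.inl_injective⟩)
      ((Iv G v).map ⟨Sum.inr, Sum.inr_injective⟩) := by
    simp [Finset.disjoint_left]
  rw [SimpleGraph.degree, hnb, Finset.card_union_of_disjoint hdisj,
    Finset.card_map, Finset.card_map, card_Iv, two_mul,
    ← SimpleGraph.card_neighborFinset_eq_degree]

lemma degree_Tgraph_inr {u v : α} (hadj : G.Adj u v) :
    (Tgraph G).degree (Sum.inr ⟨s(u,v), hadj⟩) = G.degree u + G.degree v := by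
  classical
  have hne : u ≠ v := hadj.ne
  let e : G.edgeSet := ⟨s(u,v), hadj⟩
  have hcoe : (e : Sym2 α) = s(u,v) := rfl
  have hnb : (Tgraph G).neighborFinset (Sum.inr e) =
      ({Sum.inl u, Sum.inl v} : Finset (α ⊕ G.edgeSet)) ∪
        (((Iv G u ∪ Iv G v).erase e).map ⟨Sum.inr, Sum.inr_injective⟩) := by
    ext x
    cases x with
    | inl w =>
        simp [SimpleGraph.mem_neighborFinset, tAdj_inr_inl, hcoe, Sym2.mem_iff]
    | inr f =>
        simp only [SimpleGraph.mem_neighborFinset, tAdj_inr_inr, Finset.mem_union,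
          Finset.mem_insert, Finset.mem_singleton, Finset.mem_map, Finset.mem_erase,
          Function.Embedding.coeFn_mk, Sum.inr.injEq, exists_eq_right,
          reduceCtorEq, false_or]
        constructor
        · rintro ⟨hef, w, hwe, hwf⟩
          have hw : w = u ∨ w = v := Sym2.mem_iff.1 hwe
          refine ⟨Ne.symm hef, ?_⟩
          rcases hw with h | h
          · exact Or.inl ((mem_Iv G).2 (h ▸ hwf))
          · exact Or.inr ((mem_Iv G).2 (h ▸ hwf))
        · rintro ⟨hfe, hf⟩
          refine ⟨Ne.symm hfe, ?_⟩
          rcases hf with h | h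
          · exact ⟨u, by simp [hcoe], (mem_Iv G).1 h⟩
          · exact ⟨v, by simp [hcoe], (mem_Iv G).1 h⟩
  have hdisj : Disjoint ({Sum.inl u, Sum.inl v} : Finset (α ⊕ G.edgeSet))
      ((((Iv G u ∪ Iv G v).erase e).map ⟨Sum.inr, Sum.inr_injective⟩)) := by
    simp [Finset.disjoint_left]
  have hmem : e ∈ Iv G u ∪ Iv G v :=
    Finset.mem_union_left _ ((mem_Iv G).2 (by simp [hcoe]))
  have hinter : Iv G u ∩ Iv G v = {e} := by
    ext f
    simp only [Finset.mem_inter, mem_Iv, Finset.mem_singleton]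
    constructor
    · rintro ⟨h1, h2⟩
      exact Subtype.ext ((Sym2.mem_and_mem_iff hne).1 ⟨h1, h2⟩)
    · rintro rfl
      constructor <;> simp [hcoe]
  have h1 : ((Iv G u ∪ Iv G v).erase e).card + 1 = (Iv G u ∪ Iv G v).card :=
    Finset.card_erase_add_one hmem
  have h2 : (Iv G u ∪ Iv G v).card + (Iv G u ∩ Iv G v).card =
      (Iv G u).card + (Iv G v).card := Finset.card_union_add_card_inter _ _
  rw [hinter, Finset.card_singleton, card_Iv, card_Iv] at h2
  have hcard2 : ({Sum.inl u, Sum.inl v} : Finset (α ⊕ G.edgeSet)).card = 2 := by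
    rw [Finset.card_insert_of_notMem (by simp [hne]), Finset.card_singleton]
  rw [SimpleGraph.degree, hnb, Finset.card_union_of_disjoint hdisj, hcard2,
    Finset.card_map]
  omega
end
section
variable {α : Type*} [Fintype α] (G : SimpleGraph α)

lemma sum_edge_cubes :
    ∑ e ∈ G.edgeFinset, Sym2.lift ⟨fun u v => G.degree u ^ 3 + G.degree v ^ 3,
      fun u v => by ring⟩ e = xiIndex G 4 := by
  classical
  have key := sumDartEdge G (fun u v => G.degree u ^ 3 + G.degree v ^ 3)
    (fun u v => by ring)
  have hsplit : ∑ d : G.Dart, (G.degree d.fst ^ 3 + G.degree d.snd ^ 3)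
      = 2 * ∑ d : G.Dart, G.degree d.fst ^ 3 := by
    rw [Finset.sum_add_distrib, sumDartSnd G (fun w => G.degree w ^ 3), two_mul]
  have hfst : ∑ d : G.Dart, G.degree d.fst ^ 3 = xiIndex G 4 := by
    rw [sumDartFst G (fun v w => G.degree v ^ 3)]
    unfold xiIndex
    refine Finset.sum_congr rfl fun v _ => ?_
    rw [Finset.sum_const, SimpleGraph.card_neighborFinset_eq_degree, smul_eq_mul]
    ring
  rw [hsplit, hfst] at key
  omega
end

theorem Findex_Tgraph {α : Type*} [Fintype α] (G : SimpleGraph α) :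
    Findex (Tgraph G) = 8 * Findex G + xiIndex G 4 + 3 * ReZG G := by
  classical
  unfold Findex
  rw [Fintype.sum_sum_type]
  have hinl : ∑ v : α, (Tgraph G).degree (Sum.inl v) ^ 3
      = 8 * ∑ v : α, G.degree v ^ 3 := by
    rw [Finset.mul_sum]
    refine Finset.sum_congr rfl fun v _ => ?_
    rw [degree_Tgraph_inl]; ring
  have hinr : ∑ e : G.edgeSet, (Tgraph G).degree (Sum.inr e) ^ 3
      = ∑ e ∈ G.edgeFinset,
          Sym2.lift ⟨fun u v => (G.degree u + G.degree v) ^ 3, fun u v => by ring⟩ e := by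
    rw [← Finset.sum_coe_sort G.edgeFinset]
    refine Fintype.sum_equiv
      (Equiv.subtypeEquivRight (fun s => (SimpleGraph.mem_edgeFinset).symm)) _ _ ?_
    rintro ⟨s, hs⟩
    induction s using Sym2.ind with
    | _ u v =>
      have hadj : G.Adj u v := hs
      show (Tgraph G).degree (Sum.inr ⟨s(u,v), hs⟩) ^ 3 = _
      rw [degree_Tgraph_inr G hadj]
      simp
  have hexp : ∑ e ∈ G.edgeFinset,
      Sym2.lift ⟨fun u v => (G.degree u + G.degree v) ^ 3, fun u v => by ring⟩ e
      = xiIndex G 4 + 3 * ReZG G := by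
    have : ∀ e ∈ G.edgeFinset,
        Sym2.lift ⟨fun u v => (G.degree u + G.degree v) ^ 3, fun u v => by ring⟩ e
        = Sym2.lift ⟨fun u v => G.degree u ^ 3 + G.degree v ^ 3, fun u v => by ring⟩ e
          + 3 * Sym2.lift ⟨fun u v => G.degree u * G.degree v * (G.degree u + G.degree v),
              fun u v => by ring⟩ e := by
      intro e _
      induction e using Sym2.ind with
      | _ u v => simp; ring
    rw [Finset.sum_congr rfl this, Finset.sum_add_distrib, ← Finset.mul_sum,
      sum_edge_cubes]
    rfl
  rw [hinl, hinr, hexp]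
  omega
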